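/- arXiv:2311.10046 — 3 statements merged into one kernel-verified Lean document; each statement's English description precedes it below -/
import Mathlib

section
/- Let m0 = [[0,1,0],[1,0,0],[0,1,1]] and m1 = [[1,1,0],[0,0,1],[0,1,0]] (the Cassaigne matrices) and let C = M·ℝ₊³ where M = [[0,1,1],[1,1,1],[1,0,1]]. Then m0ᵀ·C ∪ m1ᵀ·C = C, and the interiors of m0ᵀ·C and m1ᵀ·C are disjoint. -/
open Matrix

/-- The cone `m · ℝ₊³`. -/
def matCone (m : Matrix (Fin 3) (Fin 3) ℝ) : Set (Fin 3 → ℝ) :=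
  {y | ∃ v : Fin 3 → ℝ, (∀ i, 0 ≤ v i) ∧ y = m.mulVec v}

lemma interior_hyperplane_empty :
    interior {x : Fin 3 → ℝ | x 0 = x 2} = (∅ : Set (Fin 3 → ℝ)) := by
  ext x
  simp only [Set.mem_empty_iff_false, iff_false]
  intro hx
  have hxH : x ∈ {x : Fin 3 → ℝ | x 0 = x 2} := interior_subset hx
  rw [mem_interior_iff_mem_nhds, Metric.mem_nhds_iff] at hx
  obtain ⟨ε, hε, hball⟩ := hx
  set y : Fin 3 → ℝ := Function.update x 0 (x 0 + ε / 2) with hy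
  have hyb : y ∈ Metric.ball x ε := by
    rw [Metric.mem_ball, dist_pi_lt_iff hε]
    intro i
    by_cases h : i = 0
    · subst h
      have h0 : y 0 = x 0 + ε / 2 := by simp [hy]
      rw [h0, Real.dist_eq, show x 0 + ε / 2 - x 0 = ε / 2 by ring,
        abs_of_pos (by linarith)]
      linarith
    · simp only [hy, Function.update_of_ne h]
      simpa using hε
  have hyH := hball hyb
  have h0 : y 0 = x 0 + ε / 2 := by simp [hy]
  have h2 : y 2 = x 2 := by simp [hy, Function.update_of_ne (by decide : (2 : Fin 3) ≠ 0)]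
  have he : x 0 + ε / 2 = x 2 := by rw [← h0, ← h2]; exact hyH
  have hx02 : x 0 = x 2 := hxH
  linarith

/-- `C = M·ℝ₊³` is a domain for the Cassaigne algorithm:
`m0ᵀ·C ∪ m1ᵀ·C = C` with disjoint interiors. -/
theorem cassaigne_domain :
    let m0 : Matrix (Fin 3) (Fin 3) ℝ := !![0, 1, 0; 1, 0, 0; 0, 1, 1]
    let m1 : Matrix (Fin 3) (Fin 3) ℝ := !![1, 1, 0; 0, 0, 1; 0, 1, 0]
    let M : Matrix (Fin 3) (Fin 3) ℝ := !![0, 1, 1; 1, 1, 1; 1, 0, 1]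
    let C : Set (Fin 3 → ℝ) := matCone M
    ((m0.transpose.mulVec '' C) ∪ (m1.transpose.mulVec '' C) = C) ∧
    (interior (m0.transpose.mulVec '' C) ∩ interior (m1.transpose.mulVec '' C) = ∅) := by
  intro m0 m1 M C
  constructor
  · apply Set.Subset.antisymm
    · rintro x (⟨z, ⟨v, hv, rfl⟩, rfl⟩ | ⟨z, ⟨v, hv, rfl⟩, rfl⟩)
      · refine ⟨![v 2, v 1 + v 2, v 0], ?_, ?_⟩
        · intro i; fin_cases i <;> simp <;> linarith [hv 0, hv 1, hv 2]
        · funext i; fin_cases i <;>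
            simp [m0, M, Matrix.mulVec, dotProduct, Fin.sum_univ_three,
              Matrix.transpose_apply, Matrix.vecHead, Matrix.vecTail, Function.comp] <;> ring
      · refine ⟨![v 0 + v 2, v 2, v 1], ?_, ?_⟩
        · intro i; fin_cases i <;> simp <;> linarith [hv 0, hv 1, hv 2]
        · funext i; fin_cases i <;>
            simp [m1, M, Matrix.mulVec, dotProduct, Fin.sum_univ_three,
              Matrix.transpose_apply, Matrix.vecHead, Matrix.vecTail, Function.comp] <;> ring
    · rintro y ⟨v, hv, rfl⟩
      by_cases h : v 0 ≤ v 1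
      · left
        refine ⟨M.mulVec ![v 2, v 1 - v 0, v 0], ⟨![v 2, v 1 - v 0, v 0], ?_, rfl⟩, ?_⟩
        · intro i; fin_cases i <;> simp <;> linarith [hv 0, hv 1, hv 2]
        · funext i; fin_cases i <;>
            simp [m0, M, Matrix.mulVec, dotProduct, Fin.sum_univ_three,
              Matrix.transpose_apply, Matrix.vecHead, Matrix.vecTail, Function.comp] <;> ring
      · right
        refine ⟨M.mulVec ![v 0 - v 1, v 2, v 1], ⟨![v 0 - v 1, v 2, v 1], ?_, rfl⟩, ?_⟩
        · intro i; fin_cases i <;> simp <;> linarith [hv 0, hv 1, hv 2]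
        · funext i; fin_cases i <;>
            simp [m1, M, Matrix.mulVec, dotProduct, Fin.sum_univ_three,
              Matrix.transpose_apply, Matrix.vecHead, Matrix.vecTail, Function.comp] <;> ring
  · rw [← interior_inter]
    have hsub : (m0.transpose.mulVec '' C) ∩ (m1.transpose.mulVec '' C) ⊆
        {x : Fin 3 → ℝ | x 0 = x 2} := by
      rintro x ⟨⟨z, ⟨v, hv, rfl⟩, rfl⟩, hx1⟩
      obtain ⟨z', ⟨w, hw, rfl⟩, hxe⟩ := hx1
      have e0 : (m0ᵀ.mulVec (M.mulVec v)) 0 = v 0 + v 1 + v 2 := by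
        simp [m0, M, Matrix.mulVec, dotProduct, Fin.sum_univ_three,
          Matrix.transpose_apply, Matrix.vecHead, Matrix.vecTail, Function.comp]
      have e2 : (m0ᵀ.mulVec (M.mulVec v)) 2 = v 0 + v 2 := by
        simp [m0, M, Matrix.mulVec, dotProduct, Fin.sum_univ_three,
          Matrix.transpose_apply, Matrix.vecHead, Matrix.vecTail, Function.comp]
      have f0 : (m1ᵀ.mulVec (M.mulVec w)) 0 = w 1 + w 2 := by
        simp [m1, M, Matrix.mulVec, dotProduct, Fin.sum_univ_three,
          Matrix.transpose_apply, Matrix.vecHead, Matrix.vecTail, Function.comp]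
      have f2 : (m1ᵀ.mulVec (M.mulVec w)) 2 = w 0 + w 1 + w 2 := by
        simp [m1, M, Matrix.mulVec, dotProduct, Fin.sum_univ_three,
          Matrix.transpose_apply, Matrix.vecHead, Matrix.vecTail, Function.comp]
      have h02 : (m0ᵀ.mulVec (M.mulVec v)) 0 = (m1ᵀ.mulVec (M.mulVec w)) 0 := by rw [hxe]
      have h22 : (m0ᵀ.mulVec (M.mulVec v)) 2 = (m1ᵀ.mulVec (M.mulVec w)) 2 := by rw [hxe]
      show (m0ᵀ.mulVec (M.mulVec v)) 0 = (m0ᵀ.mulVec (M.mulVec v)) 2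
      rw [e0, e2]
      rw [e0, f0] at h02
      rw [e2, f2] at h22
      have := hv 1
      have := hw 0
      linarith
    have hmono := interior_mono hsub
    rw [interior_hyperplane_empty] at hmono
    exact Set.eq_empty_iff_forall_notMem.2 fun x hx => (hmono hx)
end

section
/- Let m0 = [[0,1,0],[1,0,0],[0,1,1]] and m1 = [[1,1,0],[0,0,1],[0,1,0]]. Then m0·ℝ₊³ ∪ m1·ℝ₊³ = ℝ₊³ and the interiors of m0·ℝ₊³ and m1·ℝ₊³ are disjoint. -/
open Matrix

lemma cone0_eq : matCone !![0, 1, 0; 1, 0, 0; 0, 1, 1] =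
    {y : Fin 3 → ℝ | 0 ≤ y 0 ∧ 0 ≤ y 1 ∧ y 0 ≤ y 2} := by
  ext y
  constructor
  · rintro ⟨v, hv, rfl⟩
    have h0 := hv 0; have h1 := hv 1; have h2 := hv 2
    refine ⟨?_, ?_, ?_⟩ <;>
      simp [Matrix.mulVec, dotProduct, Fin.sum_univ_three] <;> linarith
  · rintro ⟨h0, h1, h2⟩
    refine ⟨![y 1, y 0, y 2 - y 0], ?_, ?_⟩
    · intro i; fin_cases i <;> simp <;> linarith
    · funext i; fin_cases i <;>
        simp [Matrix.mulVec, dotProduct, Fin.sum_univ_three]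

lemma cone1_eq : matCone !![1, 1, 0; 0, 0, 1; 0, 1, 0] =
    {y : Fin 3 → ℝ | 0 ≤ y 1 ∧ 0 ≤ y 2 ∧ y 2 ≤ y 0} := by
  ext y
  constructor
  · rintro ⟨v, hv, rfl⟩
    have h0 := hv 0; have h1 := hv 1; have h2 := hv 2
    refine ⟨?_, ?_, ?_⟩ <;>
      simp [Matrix.mulVec, dotProduct, Fin.sum_univ_three] <;> linarith
  · rintro ⟨h0, h1, h2⟩
    refine ⟨![y 0 - y 2, y 2, y 1], ?_, ?_⟩
    · intro i; fin_cases i <;> simp <;> linarith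
    · funext i; fin_cases i <;>
        simp [Matrix.mulVec, dotProduct, Fin.sum_univ_three]

lemma interior_sub {S : Set (Fin 3 → ℝ)} {i j : Fin 3} (hij : i ≠ j)
    (hS : ∀ y ∈ S, y i ≤ y j) : ∀ x ∈ interior S, x i < x j := by
  intro x hx
  rcases Metric.mem_nhds_iff.mp (mem_interior_iff_mem_nhds.mp hx) with ⟨ε, hε, hball⟩
  set z : Fin 3 → ℝ := Function.update x j (x j - ε / 2) with hz
  have hzball : z ∈ Metric.ball x ε := by
    rw [Metric.mem_ball, dist_pi_lt_iff hε]
    intro k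
    by_cases hk : k = j
    · subst hk
      have hzk : z k = x k - ε / 2 := Function.update_self _ _ _
      rw [hzk, Real.dist_eq, abs_of_nonpos (by linarith)]
      linarith
    · simp [hz, Function.update_of_ne hk, hε]
  have := hS z (hball hzball)
  have hzi : z i = x i := Function.update_of_ne hij _ _
  have hzj : z j = x j - ε / 2 := Function.update_self _ _ _
  rw [hzi, hzj] at this
  linarith

/-- The Cassaigne matrices form a matrices graph:
`m0·ℝ₊³ ∪ m1·ℝ₊³ = ℝ₊³` and the interiors are disjoint. -/
theorem cassaigne_matrices_graph :
    let m0 : Matrix (Fin 3) (Fin 3) ℝ := !![0, 1, 0; 1, 0, 0; 0, 1, 1]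
    let m1 : Matrix (Fin 3) (Fin 3) ℝ := !![1, 1, 0; 0, 0, 1; 0, 1, 0]
    (matCone m0 ∪ matCone m1 = {y : Fin 3 → ℝ | ∀ i, 0 ≤ y i}) ∧
    (interior (matCone m0) ∩ interior (matCone m1) = ∅) := by
  intro m0 m1
  rw [show matCone m0 = _ from cone0_eq, show matCone m1 = _ from cone1_eq]
  constructor
  · ext y
    simp only [Set.mem_union, Set.mem_setOf_eq]
    constructor
    · rintro (⟨h0, h1, h2⟩ | ⟨h0, h1, h2⟩) <;> intro i <;> fin_cases i <;> simp <;> linarith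
    · intro h
      have h0 := h 0; have h1 := h 1; have h2 := h 2
      rcases le_total (y 0) (y 2) with hc | hc
      · exact Or.inl ⟨h0, h1, hc⟩
      · exact Or.inr ⟨h1, h2, hc⟩
  · have A := interior_sub (S := {y : Fin 3 → ℝ | 0 ≤ y 0 ∧ 0 ≤ y 1 ∧ y 0 ≤ y 2})
      (i := 0) (j := 2) (by decide) (fun y hy => hy.2.2)
    have B := interior_sub (S := {y : Fin 3 → ℝ | 0 ≤ y 1 ∧ 0 ≤ y 2 ∧ y 2 ≤ y 0})
      (i := 2) (j := 0) (by decide) (fun y hy => hy.2.2)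
    ext x
    simp only [Set.mem_inter_iff, Set.mem_empty_iff_false, iff_false, not_and]
    intro hA hB
    have := A x hA
    have := B x hB
    linarith
end

section
/- Let m0 = [[1,0,0],[0,1,0],[1,1,1]], m1 = [[1,0,0],[1,1,1],[0,0,1]], m2 = [[1,1,1],[0,1,0],[0,0,1]], m3 = [[0,1,1],[1,0,1],[1,1,0]] (the reverse algorithm matrices), and let D = m3·ℝ₊³. Then m0ᵀD ∪ m1ᵀD ∪ m2ᵀD ∪ m3ᵀD = D, with pairwise Lebesgue-disjoint union (interiors disjoint). -/
open Matrix

/-- If a set is contained in a closed halfspace, its interior is in the open halfspace. -/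
lemma interior_pos (c0 c1 c2 : ℝ) (hc : 0 < c0 ^ 2 + c1 ^ 2 + c2 ^ 2)
    {S : Set (Fin 3 → ℝ)} (hS : ∀ z ∈ S, 0 ≤ c0 * z 0 + c1 * z 1 + c2 * z 2)
    {y : Fin 3 → ℝ} (hy : y ∈ interior S) :
    0 < c0 * y 0 + c1 * y 1 + c2 * y 2 := by
  rw [mem_interior_iff_mem_nhds, Metric.mem_nhds_iff] at hy
  obtain ⟨ε, hε, hball⟩ := hy
  set M : ℝ := |c0| + |c1| + |c2| + 1 with hM
  have hM0 : 0 < M := by positivity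
  set δ : ℝ := ε / (2 * M) with hδdef
  have hδ : 0 < δ := by positivity
  have hδM : δ * M = ε / 2 := by
    rw [hδdef]; field_simp
  have hc0 : |c0| ≤ M := by
    have := abs_nonneg c1; have := abs_nonneg c2; rw [hM]; linarith
  have hc1 : |c1| ≤ M := by
    have := abs_nonneg c0; have := abs_nonneg c2; rw [hM]; linarith
  have hc2 : |c2| ≤ M := by
    have := abs_nonneg c0; have := abs_nonneg c1; rw [hM]; linarith
  have hzS : (![y 0 - δ * c0, y 1 - δ * c1, y 2 - δ * c2]) ∈ S := by
    apply hball
    rw [Metric.mem_ball, dist_pi_lt_iff hε]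
    intro i
    fin_cases i <;>
      · simp only [Fin.zero_eta, Fin.mk_one, Fin.reduceFinMk, Fin.isValue,
          Matrix.cons_val_zero, Matrix.cons_val_one, Matrix.head_cons,
          Matrix.cons_val_two, Matrix.tail_cons, Real.dist_eq]
        rw [show ∀ a b : ℝ, a - b - a = -b from fun a b => by ring, abs_neg, abs_mul,
          abs_of_pos hδ]
        nlinarith [mul_le_mul_of_nonneg_left hc0 hδ.le, mul_le_mul_of_nonneg_left hc1 hδ.le,
          mul_le_mul_of_nonneg_left hc2 hδ.le]
  have h := hS _ hzS
  simp only [Matrix.cons_val_zero, Matrix.cons_val_one, Matrix.head_cons,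
    Matrix.cons_val_two, Matrix.tail_cons] at h
  nlinarith [mul_pos hδ hc]

/-- `D = m3·ℝ₊³` is a domain for the reverse algorithm:
`m0ᵀD ∪ m1ᵀD ∪ m2ᵀD ∪ m3ᵀD = D` with pairwise disjoint interiors. -/
theorem reverse_algorithm_domain :
    let m0 : Matrix (Fin 3) (Fin 3) ℝ := !![1, 0, 0; 0, 1, 0; 1, 1, 1]
    let m1 : Matrix (Fin 3) (Fin 3) ℝ := !![1, 0, 0; 1, 1, 1; 0, 0, 1]
    let m2 : Matrix (Fin 3) (Fin 3) ℝ := !![1, 1, 1; 0, 1, 0; 0, 0, 1]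
    let m3 : Matrix (Fin 3) (Fin 3) ℝ := !![0, 1, 1; 1, 0, 1; 1, 1, 0]
    let D : Set (Fin 3 → ℝ) := matCone m3
    let P : Fin 4 → Set (Fin 3 → ℝ) :=
      ![m0.transpose.mulVec '' D, m1.transpose.mulVec '' D,
        m2.transpose.mulVec '' D, m3.transpose.mulVec '' D]
    ((P 0 ∪ P 1 ∪ P 2 ∪ P 3) = D) ∧
    (∀ i j : Fin 4, i ≠ j → interior (P i) ∩ interior (P j) = ∅) := by
  intro m0 m1 m2 m3 D P
  have hD : ∀ y : Fin 3 → ℝ, y ∈ D ↔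
      0 ≤ -y 0 + y 1 + y 2 ∧ 0 ≤ y 0 - y 1 + y 2 ∧ 0 ≤ y 0 + y 1 - y 2 := by
    intro y
    constructor
    · rintro ⟨v, hv, rfl⟩
      have h0 := hv 0; have h1 := hv 1; have h2 := hv 2
      refine ⟨?_, ?_, ?_⟩ <;>
        · simp [m3, Matrix.mulVec, dotProduct, Fin.sum_univ_three, Matrix.vecHead, Matrix.vecTail] <;>
          linarith
    · rintro ⟨h1, h2, h3⟩
      refine ⟨![(-y 0 + y 1 + y 2) / 2, (y 0 - y 1 + y 2) / 2, (y 0 + y 1 - y 2) / 2],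
        ?_, ?_⟩
      · intro i; fin_cases i <;> · simp; linarith
      · funext i; fin_cases i <;>
          · simp [m3, Matrix.mulVec, dotProduct, Fin.sum_univ_three, Matrix.vecHead, Matrix.vecTail] <;>
            linarith
  have hP0 : ∀ y : Fin 3 → ℝ, y ∈ P 0 ↔
      0 ≤ -y 0 + y 1 + y 2 ∧ 0 ≤ y 0 - y 1 + y 2 ∧ 0 ≤ y 0 + y 1 - 3 * y 2 := by
    intro y
    constructor
    · rintro ⟨z, hz, rfl⟩
      rw [hD] at hz
      obtain ⟨h1, h2, h3⟩ := hz
      refine ⟨?_, ?_, ?_⟩ <;>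
        · simp [m0, Matrix.mulVec, dotProduct, Fin.sum_univ_three,
            Matrix.transpose_apply, Matrix.vecHead, Matrix.vecTail] <;>
          linarith
    · rintro ⟨h1, h2, h3⟩
      refine ⟨![y 0 - y 2, y 1 - y 2, y 2], (hD _).mpr ⟨by simp; linarith, by simp; linarith,
        by simp; linarith⟩, ?_⟩
      funext i; fin_cases i <;>
        · simp [m0, Matrix.mulVec, dotProduct, Fin.sum_univ_three,
            Matrix.transpose_apply, Matrix.vecHead, Matrix.vecTail] <;>
          linarith
  have hP1 : ∀ y : Fin 3 → ℝ, y ∈ P 1 ↔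
      0 ≤ -y 0 + y 1 + y 2 ∧ 0 ≤ y 0 - 3 * y 1 + y 2 ∧ 0 ≤ y 0 + y 1 - y 2 := by
    intro y
    constructor
    · rintro ⟨z, hz, rfl⟩
      rw [hD] at hz
      obtain ⟨h1, h2, h3⟩ := hz
      refine ⟨?_, ?_, ?_⟩ <;>
        · simp [m1, Matrix.mulVec, dotProduct, Fin.sum_univ_three,
            Matrix.transpose_apply, Matrix.vecHead, Matrix.vecTail] <;>
          linarith
    · rintro ⟨h1, h2, h3⟩
      refine ⟨![y 0 - y 1, y 1, y 2 - y 1], (hD _).mpr ⟨by simp; linarith, by simp; linarith,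
        by simp; linarith⟩, ?_⟩
      funext i; fin_cases i <;>
        · simp [m1, Matrix.mulVec, dotProduct, Fin.sum_univ_three,
            Matrix.transpose_apply, Matrix.vecHead, Matrix.vecTail] <;>
          linarith
  have hP2 : ∀ y : Fin 3 → ℝ, y ∈ P 2 ↔
      0 ≤ -3 * y 0 + y 1 + y 2 ∧ 0 ≤ y 0 - y 1 + y 2 ∧ 0 ≤ y 0 + y 1 - y 2 := by
    intro y
    constructor
    · rintro ⟨z, hz, rfl⟩
      rw [hD] at hz
      obtain ⟨h1, h2, h3⟩ := hz
      refine ⟨?_, ?_, ?_⟩ <;>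
        · simp [m2, Matrix.mulVec, dotProduct, Fin.sum_univ_three,
            Matrix.transpose_apply, Matrix.vecHead, Matrix.vecTail] <;>
          linarith
    · rintro ⟨h1, h2, h3⟩
      refine ⟨![y 0, y 1 - y 0, y 2 - y 0], (hD _).mpr ⟨by simp; linarith, by simp; linarith,
        by simp; linarith⟩, ?_⟩
      funext i; fin_cases i <;>
        · simp [m2, Matrix.mulVec, dotProduct, Fin.sum_univ_three,
            Matrix.transpose_apply, Matrix.vecHead, Matrix.vecTail] <;>
          linarith
  have hP3 : ∀ y : Fin 3 → ℝ, y ∈ P 3 ↔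
      0 ≤ 3 * y 0 - y 1 - y 2 ∧ 0 ≤ -y 0 + 3 * y 1 - y 2 ∧ 0 ≤ -y 0 - y 1 + 3 * y 2 := by
    intro y
    constructor
    · rintro ⟨z, hz, rfl⟩
      rw [hD] at hz
      obtain ⟨h1, h2, h3⟩ := hz
      refine ⟨?_, ?_, ?_⟩ <;>
        · simp [m3, Matrix.mulVec, dotProduct, Fin.sum_univ_three,
            Matrix.transpose_apply, Matrix.vecHead, Matrix.vecTail] <;>
          linarith
    · rintro ⟨h1, h2, h3⟩
      refine ⟨![(-y 0 + y 1 + y 2) / 2, (y 0 - y 1 + y 2) / 2, (y 0 + y 1 - y 2) / 2],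
        (hD _).mpr ⟨by simp; linarith, by simp; linarith, by simp; linarith⟩, ?_⟩
      funext i; fin_cases i <;>
        · simp [m3, Matrix.mulVec, dotProduct, Fin.sum_univ_three,
            Matrix.transpose_apply, Matrix.vecHead, Matrix.vecTail] <;>
          linarith
  constructor
  · ext y
    simp only [Set.mem_union]
    rw [hP0 y, hP1 y, hP2 y, hP3 y, hD y]
    constructor
    · rintro (((⟨a, b, c⟩ | ⟨a, b, c⟩) | ⟨a, b, c⟩) | ⟨a, b, c⟩) <;>
        exact ⟨by linarith, by linarith, by linarith⟩
    · rintro ⟨a, b, c⟩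
      rcases le_or_gt 0 (y 0 + y 1 - 3 * y 2) with h | h
      · exact Or.inl (Or.inl (Or.inl ⟨a, b, h⟩))
      rcases le_or_gt 0 (y 0 - 3 * y 1 + y 2) with h' | h'
      · exact Or.inl (Or.inl (Or.inr ⟨a, h', c⟩))
      rcases le_or_gt 0 (-3 * y 0 + y 1 + y 2) with h'' | h''
      · exact Or.inl (Or.inr ⟨h'', b, c⟩)
      · exact Or.inr ⟨by linarith, by linarith, by linarith⟩
  · have hs0 : ∀ y ∈ interior (P 0),
        0 < -y 0 + y 1 + y 2 ∧ 0 < y 0 - y 1 + y 2 ∧ 0 < y 0 + y 1 - 3 * y 2 := by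
      intro y hy
      refine ⟨?_, ?_, ?_⟩
      · have := interior_pos (-1) 1 1 (by norm_num)
          (fun z hz => by have := ((hP0 z).mp hz).1; linarith) hy; linarith
      · have := interior_pos 1 (-1) 1 (by norm_num)
          (fun z hz => by have := ((hP0 z).mp hz).2.1; linarith) hy; linarith
      · have := interior_pos 1 1 (-3) (by norm_num)
          (fun z hz => by have := ((hP0 z).mp hz).2.2; linarith) hy; linarith
    have hs1 : ∀ y ∈ interior (P 1),
        0 < -y 0 + y 1 + y 2 ∧ 0 < y 0 - 3 * y 1 + y 2 ∧ 0 < y 0 + y 1 - y 2 := by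
      intro y hy
      refine ⟨?_, ?_, ?_⟩
      · have := interior_pos (-1) 1 1 (by norm_num)
          (fun z hz => by have := ((hP1 z).mp hz).1; linarith) hy; linarith
      · have := interior_pos 1 (-3) 1 (by norm_num)
          (fun z hz => by have := ((hP1 z).mp hz).2.1; linarith) hy; linarith
      · have := interior_pos 1 1 (-1) (by norm_num)
          (fun z hz => by have := ((hP1 z).mp hz).2.2; linarith) hy; linarith
    have hs2 : ∀ y ∈ interior (P 2),
        0 < -3 * y 0 + y 1 + y 2 ∧ 0 < y 0 - y 1 + y 2 ∧ 0 < y 0 + y 1 - y 2 := by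
      intro y hy
      refine ⟨?_, ?_, ?_⟩
      · have := interior_pos (-3) 1 1 (by norm_num)
          (fun z hz => by have := ((hP2 z).mp hz).1; linarith) hy; linarith
      · have := interior_pos 1 (-1) 1 (by norm_num)
          (fun z hz => by have := ((hP2 z).mp hz).2.1; linarith) hy; linarith
      · have := interior_pos 1 1 (-1) (by norm_num)
          (fun z hz => by have := ((hP2 z).mp hz).2.2; linarith) hy; linarith
    have hs3 : ∀ y ∈ interior (P 3),
        0 < 3 * y 0 - y 1 - y 2 ∧ 0 < -y 0 + 3 * y 1 - y 2 ∧ 0 < -y 0 - y 1 + 3 * y 2 := by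
      intro y hy
      refine ⟨?_, ?_, ?_⟩
      · have := interior_pos 3 (-1) (-1) (by norm_num)
          (fun z hz => by have := ((hP3 z).mp hz).1; linarith) hy; linarith
      · have := interior_pos (-1) 3 (-1) (by norm_num)
          (fun z hz => by have := ((hP3 z).mp hz).2.1; linarith) hy; linarith
      · have := interior_pos (-1) (-1) 3 (by norm_num)
          (fun z hz => by have := ((hP3 z).mp hz).2.2; linarith) hy; linarith
    intro i j hij
    ext y
    simp only [Set.mem_inter_iff, Set.mem_empty_iff_false, iff_false, not_and]
    intro hi hj
    fin_cases i <;> fin_cases j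
    · exact (hij rfl).elim
    · obtain ⟨a1, a2, a3⟩ := hs0 y hi; obtain ⟨b1, b2, b3⟩ := hs1 y hj; linarith
    · obtain ⟨a1, a2, a3⟩ := hs0 y hi; obtain ⟨b1, b2, b3⟩ := hs2 y hj; linarith
    · obtain ⟨a1, a2, a3⟩ := hs0 y hi; obtain ⟨b1, b2, b3⟩ := hs3 y hj; linarith
    · obtain ⟨a1, a2, a3⟩ := hs1 y hi; obtain ⟨b1, b2, b3⟩ := hs0 y hj; linarith
    · exact (hij rfl).elim
    · obtain ⟨a1, a2, a3⟩ := hs1 y hi; obtain ⟨b1, b2, b3⟩ := hs2 y hj; linarith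
    · obtain ⟨a1, a2, a3⟩ := hs1 y hi; obtain ⟨b1, b2, b3⟩ := hs3 y hj; linarith
    · obtain ⟨a1, a2, a3⟩ := hs2 y hi; obtain ⟨b1, b2, b3⟩ := hs0 y hj; linarith
    · obtain ⟨a1, a2, a3⟩ := hs2 y hi; obtain ⟨b1, b2, b3⟩ := hs1 y hj; linarith
    · exact (hij rfl).elim
    · obtain ⟨a1, a2, a3⟩ := hs2 y hi; obtain ⟨b1, b2, b3⟩ := hs3 y hj; linarith
    · obtain ⟨a1, a2, a3⟩ := hs3 y hi; obtain ⟨b1, b2, b3⟩ := hs0 y hj; linarith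
    · obtain ⟨a1, a2, a3⟩ := hs3 y hi; obtain ⟨b1, b2, b3⟩ := hs1 y hj; linarith
    · obtain ⟨a1, a2, a3⟩ := hs3 y hi; obtain ⟨b1, b2, b3⟩ := hs2 y hj; linarith
    · exact (hij rfl).elim
end
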